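/- Let p be a prime power (p = q^t with q prime, t ≥ 1) with p ≥ 3, and suppose there exists a balanced generalized weighing matrix BGW(p+1, p, p-1) over the cyclic group ℤ_(p-1). Then for every positive integer m, letting N be the natural number with (p - 1) * N = p^(m+1) - 1, there exists a balanced generalized weighing matrix BGW(N, p^m, p^(m-1) * (p-1)) over ℤ_(p-1). -/

import Mathlib

/-- `W` is a balanced generalized weighing matrix `BGW(v, k, lam)` over the cyclic group
`ℤ_n`: each row has exactly `k` entries different from `none`, and for every pair of
distinct rows `i, j` and every `g ∈ ZMod n`, the number of columns `c` with
`W i c = some a`, `W j c = some b` and `a - b = g` equals `lam / n`. -/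
def IsBGW (v k lam n : ℕ) (W : Fin v → Fin v → Option (ZMod n)) : Prop :=
  (∀ i, {c : Fin v | W i c ≠ none}.ncard = k) ∧
  ∀ i j : Fin v, i ≠ j → ∀ g : ZMod n,
    {c : Fin v | ∃ a b : ZMod n, W i c = some a ∧ W j c = some b ∧ a - b = g}.ncard = lam / n

open Function

lemma fiberCount {V W : Type*} [AddCommGroup V] [AddCommGroup W] [Fintype V] [Fintype W]
    (f : V →+ W) (hf : Surjective f) (w : W) :
    Fintype.card W * Nat.card {v : V // f v = w} = Fintype.card V := by
  classical
  have key : ∀ w : W, Nat.card {v : V // f v = w} = Nat.card {v : V // f v = 0} := by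
    intro w
    obtain ⟨v0, hv0⟩ := hf w
    refine Nat.card_congr ⟨fun x => ⟨x.1 - v0, by simp [map_sub, x.2, hv0]⟩,
      fun x => ⟨x.1 + v0, by simp [map_add, x.2, hv0]⟩, ?_, ?_⟩ <;>
      intro x <;> ext <;> simp
  have h1 : Fintype.card V = ∑ w : W, Nat.card {v : V // f v = w} := by
    rw [Fintype.card_congr (Equiv.sigmaFiberEquiv f).symm, Fintype.card_sigma]
    simp [Nat.card_eq_fintype_card]
  rw [h1]
  simp only [key]
  rw [Finset.sum_const, Finset.card_univ, smul_eq_mul]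

lemma quotCount {G : Type*} [Group G] (S : Subgroup G) (P : G ⧸ S → Prop) :
    Nat.card S * Set.ncard {Y : G ⧸ S | P Y} = Set.ncard {g : G | P (QuotientGroup.mk g)} := by
  rw [← Nat.card_coe_set_eq, ← Nat.card_coe_set_eq, ← Nat.card_prod]
  exact (Nat.card_congr (QuotientGroup.preimageMkEquivSubgroupProdSet S {Y | P Y})).symm

set_option maxHeartbeats 1000000 in
theorem aux {F : Type} [Field F] [Finite F] (K : Subfield F) (p n N : ℕ)
    (hp3 : 3 ≤ p) (hn : 1 ≤ n) (hK : Nat.card K = p) (hF : Nat.card F = p ^ (n + 1))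
    (hN : (p - 1) * N = p ^ (n + 1) - 1) :
    ∃ W' : Fin N → Fin N → Option (ZMod (p - 1)),
      IsBGW N (p ^ n) (p ^ (n - 1) * (p - 1)) (p - 1) W' := by
  classical
  have hp1 : 1 ≤ p - 1 := by omega
  haveI : Fintype F := Fintype.ofFinite F
  haveI : Module.Finite K F := Module.finite_iff_finite.mpr inferInstance
  -- trace
  set Tr : F →ₗ[K] K := Algebra.trace K F with hTrdef
  have hnd : ∀ x : F, x ≠ 0 → ∃ y, Tr (x * y) ≠ 0 := by
    intro x hx
    by_contra h
    push_neg at h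
    exact hx ((traceForm_nondegenerate K F).1 x (by simpa [Algebra.traceForm_apply] using h))
  have hsmul : ∀ (k : K) (y : F), Tr ((k : F) * y) = k * Tr y := by
    intro k y
    have : (k : F) * y = k • y := by rw [Algebra.smul_def]; rfl
    rw [this, map_smul, smul_eq_mul]
  -- surjectivity of y ↦ Tr (a * y) for a ≠ 0
  have hsurj1 : ∀ a : F, a ≠ 0 → Surjective (fun y => Tr (a * y)) := by
    intro a ha k
    obtain ⟨y₁, hy₁⟩ := hnd a ha
    refine ⟨((k * (Tr (a * y₁))⁻¹ : K) : F) * y₁, ?_⟩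
    show Tr (a * (((k * (Tr (a * y₁))⁻¹ : K) : F) * y₁)) = k
    have h2 : a * (((k * (Tr (a * y₁))⁻¹ : K) : F) * y₁)
        = ((k * (Tr (a * y₁))⁻¹ : K) : F) * (a * y₁) := by ring
    rw [h2, hsmul]
    field_simp
  -- cardinalities
  have hcFu : Nat.card Fˣ = p ^ (n + 1) - 1 := by rw [Nat.card_units, hF]
  have hcKu : Nat.card Kˣ = p - 1 := by rw [Nat.card_units, hK]
  -- the subgroup S = image of Kˣ in Fˣ
  set j : Kˣ →* Fˣ := Units.map ((K.subtype : K →+* F) : K →* F) with hjdef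
  have hj_coe : ∀ k : Kˣ, ((j k : Fˣ) : F) = ((k : K) : F) := fun k => rfl
  have hj_inj : Injective j := Units.map_injective K.subtype_injective
  set S : Subgroup Fˣ := j.range with hSdef
  have hcS : Nat.card S = p - 1 := by
    rw [← hcKu]
    exact (Nat.card_congr (Equiv.ofInjective _ hj_inj)).symm
  have hS_mem : ∀ w : Fˣ, w ∈ S ↔ ((w : F) ∈ K) := by
    intro w
    constructor
    · rintro ⟨k, rfl⟩
      exact (k : K).2
    · intro hw
      have hwinv : ((w⁻¹ : Fˣ) : F) ∈ K := by
        rw [Units.val_inv_eq_inv_val]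
        exact K.inv_mem hw
      refine ⟨⟨⟨(w : F), hw⟩, ⟨((w⁻¹ : Fˣ) : F), hwinv⟩, ?_, ?_⟩, ?_⟩
      · ext; simp
      · ext; simp
      · ext; rfl
  -- the quotient
  have hcQ : Nat.card (Fˣ ⧸ S) = N := by
    have h1 := Subgroup.card_eq_card_quotient_mul_card_subgroup S
    rw [hcFu, hcS, ← hN, mul_comm (Nat.card (Fˣ ⧸ S))] at h1
    exact (Nat.eq_of_mul_eq_mul_left (by omega) h1.symm)
  have eex : Nonempty (Fin N ≃ Fˣ ⧸ S) := by
    rw [← Finite.card_eq, Nat.card_eq_fintype_card, Fintype.card_fin, hcQ]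
  obtain ⟨e⟩ := eex
  -- the discrete logarithm
  have φex : Nonempty (Multiplicative (ZMod (p - 1)) ≃* Kˣ) := by
    rw [← hcKu]
    exact ⟨zmodCyclicMulEquiv inferInstance⟩
  obtain ⟨φ⟩ := φex
  set ψ : Kˣ → ZMod (p - 1) := fun u => Multiplicative.toAdd (φ.symm u) with hψdef
  have hψ_sub : ∀ (u v : Kˣ) (g : ZMod (p - 1)), ψ u - ψ v = g ↔ u = φ (Multiplicative.ofAdd g) * v := by
    intro u v g
    rw [hψdef]
    dsimp only
    rw [sub_eq_iff_eq_add']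
    constructor
    · intro h
      have h2 : φ.symm u = Multiplicative.ofAdd g * φ.symm v :=
        Multiplicative.toAdd.injective (by simpa [add_comm] using h)
      have h3 := congrArg φ h2
      simpa [map_mul] using h3
    · rintro rfl
      simp [map_mul, add_comm]
  haveI : Fintype K := Fintype.ofFinite K
  have hcKf : Fintype.card K = p := by rw [← Nat.card_eq_fintype_card, hK]
  have hcFf : Fintype.card F = p ^ (n + 1) := by rw [← Nat.card_eq_fintype_card, hF]
  -- representatives
  have hrep : ∀ u : Fˣ, ∃ k : Kˣ, (QuotientGroup.mk u : Fˣ ⧸ S).out = u * j k := by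
    intro u
    have h1 : (QuotientGroup.mk ((QuotientGroup.mk u : Fˣ ⧸ S).out) : Fˣ ⧸ S)
        = QuotientGroup.mk u := QuotientGroup.out_eq' _
    rw [eq_comm, QuotientGroup.eq] at h1
    obtain ⟨k, hk⟩ := h1
    exact ⟨k, by rw [hk]; group⟩
  -- counting bridges
  have bridge : ∀ P : Fˣ ⧸ S → Prop,
      (p - 1) * Set.ncard {Y : Fˣ ⧸ S | P Y} = Set.ncard {u : Fˣ | P (QuotientGroup.mk u)} := by
    intro P
    rw [← hcS]
    exact quotCount S P
  have hFinN : ∀ P : Fˣ ⧸ S → Prop,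
      Set.ncard {i : Fin N | P (e i)} = Set.ncard {Y : Fˣ ⧸ S | P Y} := by
    intro P
    have himg : e '' {i : Fin N | P (e i)} = {Y | P Y} := by
      ext Y
      simp only [Set.mem_image, Set.mem_setOf_eq]
      constructor
      · rintro ⟨i, hi, rfl⟩; exact hi
      · intro hY; exact ⟨e.symm Y, by simpa using hY, by simp⟩
    rw [← himg, Set.ncard_image_of_injective _ e.injective]
  have unitsCount : ∀ C : F → Prop, (∀ y, C y → y ≠ 0) →
      Set.ncard {u : Fˣ | C (u : F)} = Set.ncard {y : F | C y} := by
    intro C hC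
    rw [← Nat.card_coe_set_eq, ← Nat.card_coe_set_eq]
    apply Nat.card_congr
    refine ⟨fun u => ⟨(u.1 : F), u.2⟩, fun y => ⟨Units.mk0 y.1 (hC y.1 y.2), y.2⟩, ?_, ?_⟩
    · intro u
      apply Subtype.ext
      apply Units.ext
      rfl
    · intro y
      rfl
  -- kernel counts
  have card_ker1 : ∀ a : F, a ≠ 0 → Set.ncard {y : F | Tr (a * y) = 0} = p ^ n := by
    intro a ha
    have hf := fiberCount (V := F) (W := K)
      (Tr.toAddMonoidHom.comp (AddMonoidHom.mulLeft a)) (hsurj1 a ha) 0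
    rw [hcKf, hcFf] at hf
    have h2 : Set.ncard {y : F | Tr (a * y) = 0}
        = Nat.card {y : F // (Tr.toAddMonoidHom.comp (AddMonoidHom.mulLeft a)) y = 0} := by
      rw [← Nat.card_coe_set_eq]
      exact Nat.card_congr (Equiv.subtypeEquivRight (fun y => by simp [AddMonoidHom.mulLeft]))
    rw [h2]
    have hp0 : 0 < p := by omega
    have := hf
    rw [pow_succ, mul_comm (p ^ n) p] at this
    exact Nat.eq_of_mul_eq_mul_left hp0 this
  -- the matrix
  set x : Fin N → Fˣ := fun i => (e i).out with hxdef
  set W' : Fin N → Fin N → Option (ZMod (p - 1)) := fun i c =>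
    if h : Tr (((x i : Fˣ) : F) * ((x c : Fˣ) : F)) = 0 then none
    else some (ψ (Units.mk0 (Tr (((x i : Fˣ) : F) * ((x c : Fˣ) : F))) h)) with hW'def
  refine ⟨W', ?_, ?_⟩
  · -- row counts
    intro i
    have hxne : ((x i : Fˣ) : F) ≠ 0 := Units.ne_zero _
    set P : Fˣ ⧸ S → Prop := fun Y => Tr (((x i : Fˣ) : F) * (Y.out : F)) ≠ 0 with hPdef
    have hset : {c : Fin N | W' i c ≠ none} = {c : Fin N | P (e c)} := by
      ext c
      have hxc : (Quotient.out (e c)) = x c := rfl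
      simp only [Set.mem_setOf_eq, hPdef, hxc, hW'def]
      by_cases h : Tr (((x i : Fˣ) : F) * ((x c : Fˣ) : F)) = 0
      · rw [dif_pos h]
        simp [h]
      · rw [dif_neg h]
        simp [h]
    rw [hset, hFinN P]
    have hPmk : {u : Fˣ | P (QuotientGroup.mk u)}
        = {u : Fˣ | Tr (((x i : Fˣ) : F) * (u : F)) ≠ 0} := by
      ext u
      obtain ⟨k, hk⟩ := hrep u
      simp only [Set.mem_setOf_eq, hPdef, hk]
      have h2 : ((x i : Fˣ) : F) * ((u * j k : Fˣ) : F)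
          = ((k : K) : F) * (((x i : Fˣ) : F) * (u : F)) := by
        rw [Units.val_mul, hj_coe]
        ring
      rw [h2, hsmul, mul_ne_zero_iff]
      simp [Units.ne_zero k]
    have hcount : Set.ncard {u : Fˣ | Tr (((x i : Fˣ) : F) * (u : F)) ≠ 0}
        = p ^ (n + 1) - p ^ n := by
      have huc : Set.ncard {u : Fˣ | Tr (((x i : Fˣ) : F) * (u : F)) ≠ 0}
          = Set.ncard {y : F | Tr (((x i : Fˣ) : F) * y) ≠ 0} :=
        unitsCount (fun y => Tr (((x i : Fˣ) : F) * y) ≠ 0)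
          (fun y hy => by rintro rfl; simp at hy)
      rw [huc]
      have hdiff : {y : F | Tr (((x i : Fˣ) : F) * y) ≠ 0}
          = Set.univ \ {y : F | Tr (((x i : Fˣ) : F) * y) = 0} := by ext; simp
      rw [hdiff, Set.ncard_diff (Set.subset_univ _), Set.ncard_univ, hF, card_ker1 _ hxne]
    have hbr := bridge P
    rw [hPmk, hcount] at hbr
    have harith : p ^ (n + 1) - p ^ n = (p - 1) * p ^ n := by
      rw [Nat.sub_mul, one_mul, pow_succ, mul_comm (p ^ n) p]
    rw [harith] at hbr
    exact Nat.eq_of_mul_eq_mul_left (show 0 < p - 1 by omega) hbr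
  · -- pair counts
    intro i i' hii' g
    have hW'none : ∀ i c : Fin N, Tr (((x i : Fˣ) : F) * ((x c : Fˣ) : F)) = 0 →
        W' i c = none := by
      intro i c h
      simp only [hW'def]
      rw [dif_pos h]
    have hW'some : ∀ (i c : Fin N) (h : ¬ Tr (((x i : Fˣ) : F) * ((x c : Fˣ) : F)) = 0),
        W' i c = some (ψ (Units.mk0 _ h)) := by
      intro i c h
      simp only [hW'def]
      rw [dif_neg h]
    have hne_cosets : e i ≠ e i' := fun h => hii' (e.injective h)
    set c0 : Kˣ := φ (Multiplicative.ofAdd g) with hc0def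
    set a : F := ((x i : Fˣ) : F) - ((c0 : K) : F) * ((x i' : Fˣ) : F) with hadef
    set b : F := ((x i' : Fˣ) : F) with hbdef
    have hb : b ≠ 0 := Units.ne_zero _
    have hii'S : ∀ kk : K, kk ≠ 0 → ((x i : Fˣ) : F) ≠ (kk : F) * b := by
      intro kk hkk heq
      apply hne_cosets
      have h1 : ((((x i') : Fˣ)⁻¹ * (x i) : Fˣ) : F) = ((kk : K) : F) := by
        rw [Units.val_mul, Units.val_inv_eq_inv_val, heq, hbdef]
        field_simp
      have h2 : ((x i')⁻¹ * (x i) : Fˣ) ∈ S := by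
        rw [hS_mem]
        rw [h1]
        exact (kk : K).2
      have h3 : (QuotientGroup.mk (x i') : Fˣ ⧸ S) = QuotientGroup.mk (x i) :=
        QuotientGroup.eq.mpr h2
      have h4 : (QuotientGroup.mk (x i) : Fˣ ⧸ S) = e i := QuotientGroup.out_eq' _
      have h5 : (QuotientGroup.mk (x i') : Fˣ ⧸ S) = e i' := QuotientGroup.out_eq' _
      rw [← h4, ← h3, h5]
    have ha : a ≠ 0 := by
      intro h0
      refine hii'S (c0 : K) (Units.ne_zero c0) ?_
      rw [hadef] at h0
      have := sub_eq_zero.mp h0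
      exact this
    have hindep : ∀ kk : K, b ≠ (kk : F) * a := by
      intro kk heq
      by_cases hkk : kk = 0
      · rw [hkk] at heq
        simp at heq
        exact hb heq
      · -- b = kk (xi - c0 b)  ⇒  xi = (kk⁻¹ + c0) b
        set kk' : K := kk⁻¹ + (c0 : K) with hkk'def
        have hxi : ((x i : Fˣ) : F) = (kk' : F) * b := by
          have h1 : ((kk : K) : F) ≠ 0 := by
            simpa using hkk
          have h2 : (kk' : F) = ((kk : K) : F)⁻¹ + ((c0 : K) : F) := by
            rw [hkk'def]
            push_cast
            rfl
          rw [hadef] at heq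
          have h3 : ((kk : K) : F) * ((x i : Fˣ) : F)
              = b * (1 + ((kk : K) : F) * ((c0 : K) : F)) := by linear_combination -heq
          have h4 : ((kk : K) : F)⁻¹ * (((kk : K) : F) * ((x i : Fˣ) : F)) = ((x i : Fˣ) : F) :=
            inv_mul_cancel_left₀ h1 _
          rw [h2, ← h4, h3]
          field_simp
        have hkk' : kk' ≠ 0 := by
          intro h0
          rw [h0] at hxi
          simp at hxi
        exact hii'S kk' hkk' hxi
    -- surjectivity of the joint map
    have hLsurj : Surjective (fun y : F => (Tr (a * y), Tr (b * y))) := by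
      obtain ⟨y₀, hy₀0⟩ := hsurj1 a ha 1
      have hy₀ : Tr (a * y₀) = 1 := hy₀0
      have hh : ∃ h : F, Tr (a * h) = 0 ∧ Tr (b * h) ≠ 0 := by
        by_contra hcon
        push_neg at hcon
        have hby : ∀ y : F, Tr (b * y) = Tr (b * y₀) * Tr (a * y) := by
          intro y
          have h1 : Tr (a * (y - ((Tr (a * y) : K) : F) * y₀)) = 0 := by
            have hrw : a * (y - ((Tr (a * y) : K) : F) * y₀)
                = a * y - ((Tr (a * y) : K) : F) * (a * y₀) := by ring
            rw [hrw, map_sub, hsmul, hy₀, mul_one, sub_self]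
          have h2 := hcon _ h1
          have hrw : b * (y - ((Tr (a * y) : K) : F) * y₀)
              = b * y - ((Tr (a * y) : K) : F) * (b * y₀) := by ring
          rw [hrw, map_sub, hsmul] at h2
          have h3 := sub_eq_zero.mp h2
          rw [h3]
          ring
        have hzero : ∀ y : F, Tr ((b - ((Tr (b * y₀) : K) : F) * a) * y) = 0 := by
          intro y
          have hrw : (b - ((Tr (b * y₀) : K) : F) * a) * y
              = b * y - ((Tr (b * y₀) : K) : F) * (a * y) := by ring
          rw [hrw, map_sub, hsmul, hby y]
          ring
        have hba : b - ((Tr (b * y₀) : K) : F) * a = 0 := by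
          by_contra hne
          obtain ⟨y, hy⟩ := hnd _ hne
          exact hy (hzero y)
        exact hindep _ (sub_eq_zero.mp hba)
      obtain ⟨h, hh1, hh2⟩ := hh
      rintro ⟨u, v⟩
      refine ⟨((u : K) : F) * y₀ + (((v - u * Tr (b * y₀)) * (Tr (b * h))⁻¹ : K) : F) * h, ?_⟩
      have hrw1 : ∀ z : F, ∀ k1 k2 : K, z * ((k1 : F) * y₀ + (k2 : F) * h)
          = (k1 : F) * (z * y₀) + (k2 : F) * (z * h) := by intros; ring
      show (Tr (a * _), Tr (b * _)) = (u, v)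
      rw [hrw1, hrw1, map_add, map_add, hsmul, hsmul, hsmul, hsmul, hy₀, hh1]
      refine Prod.ext ?_ ?_
      · show u * 1 + (v - u * Tr (b * y₀)) * (Tr (b * h))⁻¹ * 0 = u
        ring
      · show u * Tr (b * y₀) + (v - u * Tr (b * y₀)) * (Tr (b * h))⁻¹ * Tr (b * h) = v
        field_simp
        ring
    -- kernel of the joint map
    have card_ker2 : Set.ncard {y : F | Tr (a * y) = 0 ∧ Tr (b * y) = 0} = p ^ (n - 1) := by
      set L : F →+ K × K := (Tr.toAddMonoidHom.comp (AddMonoidHom.mulLeft a)).prod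
        (Tr.toAddMonoidHom.comp (AddMonoidHom.mulLeft b)) with hLdef
      have hLsurj' : Surjective L := hLsurj
      have hf := fiberCount L hLsurj' 0
      rw [Fintype.card_prod, hcKf, hcFf] at hf
      have h2 : Set.ncard {y : F | Tr (a * y) = 0 ∧ Tr (b * y) = 0}
          = Nat.card {y : F // L y = 0} := by
        rw [← Nat.card_coe_set_eq]
        refine Nat.card_congr (Equiv.subtypeEquivRight (fun y => ?_))
        simp only [hLdef, AddMonoidHom.prod_apply, AddMonoidHom.coe_comp,
          LinearMap.toAddMonoidHom_coe, comp_apply, AddMonoidHom.coe_mulLeft,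
          Prod.mk_eq_zero, Set.mem_setOf_eq]
      rw [h2]
      have hexp : p ^ (n + 1) = p * p * p ^ (n - 1) := by
        have h3 : n + 1 = 2 + (n - 1) := by omega
        rw [h3, pow_add, pow_two]
      rw [hexp] at hf
      exact Nat.eq_of_mul_eq_mul_left (show 0 < p * p by positivity) hf
    -- the column condition
    have hcond : ∀ cc : Fin N,
        (∃ a' b' : ZMod (p - 1), W' i cc = some a' ∧ W' i' cc = some b' ∧ a' - b' = g)
        ↔ (Tr (b * ((x cc : Fˣ) : F)) ≠ 0 ∧ Tr (a * ((x cc : Fˣ) : F)) = 0) := by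
      intro cc
      have haT : Tr (a * ((x cc : Fˣ) : F))
          = Tr (((x i : Fˣ) : F) * ((x cc : Fˣ) : F))
            - (c0 : K) * Tr (((x i' : Fˣ) : F) * ((x cc : Fˣ) : F)) := by
        have hrw : a * ((x cc : Fˣ) : F) = ((x i : Fˣ) : F) * ((x cc : Fˣ) : F)
            - ((c0 : K) : F) * (((x i' : Fˣ) : F) * ((x cc : Fˣ) : F)) := by
          rw [hadef]; ring
        rw [hrw, map_sub, hsmul]
      by_cases h2 : Tr (((x i' : Fˣ) : F) * ((x cc : Fˣ) : F)) = 0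
      · rw [hW'none i' cc h2]
        simp only [hbdef, h2, ne_eq, not_true_eq_false, false_and, iff_false, not_exists]
        rintro a' b' ⟨-, h', -⟩
        exact Option.some_ne_none _ h'.symm
      · by_cases h1 : Tr (((x i : Fˣ) : F) * ((x cc : Fˣ) : F)) = 0
        · rw [hW'none i cc h1]
          constructor
          · rintro ⟨a', b', h', -, -⟩
            exact absurd h' (by simp)
          · rintro ⟨hT2, heq⟩
            exfalso
            rw [haT, h1, zero_sub, neg_eq_zero] at heq
            have : Tr (((x i' : Fˣ) : F) * ((x cc : Fˣ) : F)) = 0 := by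
              have hc0 : ((c0 : K)) ≠ 0 := Units.ne_zero c0
              exact (mul_eq_zero.mp heq).resolve_left hc0
            exact h2 this
        · rw [hW'some i cc h1, hW'some i' cc h2]
          constructor
          · rintro ⟨a', b', ha', hb', hg⟩
            obtain rfl : _ = a' := Option.some_inj.mp ha'
            obtain rfl : _ = b' := Option.some_inj.mp hb'
            rw [hψ_sub] at hg
            have hval := congrArg Units.val hg
            simp only [Units.val_mul, Units.val_mk0] at hval
            refine ⟨h2, ?_⟩
            rw [haT, hval, ← hc0def]
            ring
          · rintro ⟨-, heq⟩
            refine ⟨_, _, rfl, rfl, ?_⟩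
            rw [hψ_sub]
            apply Units.ext
            simp only [Units.val_mul, Units.val_mk0]
            rw [haT] at heq
            have := sub_eq_zero.mp heq
            rw [this, ← hc0def]
      -- end hcond
    set P' : Fˣ ⧸ S → Prop := fun Y =>
      Tr (b * ((Y.out : Fˣ) : F)) ≠ 0 ∧ Tr (a * ((Y.out : Fˣ) : F)) = 0 with hP'def
    have hset : {cc : Fin N | ∃ a' b' : ZMod (p - 1),
        W' i cc = some a' ∧ W' i' cc = some b' ∧ a' - b' = g} = {cc : Fin N | P' (e cc)} := by
      ext cc
      have hxc : (Quotient.out (e cc)) = x cc := rfl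
      simp only [Set.mem_setOf_eq, hP'def, hxc]
      exact hcond cc
    rw [hset, hFinN P']
    have hP'mk : {u : Fˣ | P' (QuotientGroup.mk u)}
        = {u : Fˣ | Tr (b * (u : F)) ≠ 0 ∧ Tr (a * (u : F)) = 0} := by
      ext u
      obtain ⟨k, hk⟩ := hrep u
      simp only [Set.mem_setOf_eq, hP'def, hk]
      have hrwb : b * ((u * j k : Fˣ) : F) = ((k : K) : F) * (b * (u : F)) := by
        rw [Units.val_mul, hj_coe]; ring
      have hrwa : a * ((u * j k : Fˣ) : F) = ((k : K) : F) * (a * (u : F)) := by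
        rw [Units.val_mul, hj_coe]; ring
      rw [hrwb, hrwa, hsmul, hsmul, mul_ne_zero_iff, mul_eq_zero]
      have hkne : ((k : K)) ≠ 0 := Units.ne_zero k
      constructor
      · rintro ⟨⟨-, hb'⟩, hor⟩
        exact ⟨hb', hor.resolve_left hkne⟩
      · rintro ⟨hb', haz⟩
        exact ⟨⟨hkne, hb'⟩, Or.inr haz⟩
    have hcount : Set.ncard {u : Fˣ | Tr (b * (u : F)) ≠ 0 ∧ Tr (a * (u : F)) = 0}
        = p ^ n - p ^ (n - 1) := by
      have huc : Set.ncard {u : Fˣ | Tr (b * (u : F)) ≠ 0 ∧ Tr (a * (u : F)) = 0}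
          = Set.ncard {y : F | Tr (b * y) ≠ 0 ∧ Tr (a * y) = 0} :=
        unitsCount (fun y => Tr (b * y) ≠ 0 ∧ Tr (a * y) = 0)
          (fun y hy => by rintro rfl; simp at hy)
      rw [huc]
      have hdiff : {y : F | Tr (b * y) ≠ 0 ∧ Tr (a * y) = 0}
          = {y : F | Tr (a * y) = 0} \ {y : F | Tr (a * y) = 0 ∧ Tr (b * y) = 0} := by
        ext y
        simp only [Set.mem_setOf_eq, Set.mem_diff]
        tauto
      rw [hdiff, Set.ncard_diff (fun y hy => hy.1), card_ker1 a ha, card_ker2]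
    have hbr := bridge P'
    rw [hP'mk, hcount] at hbr
    have harith : p ^ n - p ^ (n - 1) = (p - 1) * p ^ (n - 1) := by
      rw [Nat.sub_mul, one_mul]
      congr 1
      rw [← pow_succ']
      congr 1
      omega
    rw [harith] at hbr
    have hgoal := Nat.eq_of_mul_eq_mul_left (show 0 < p - 1 by omega) hbr
    rw [hgoal, Nat.mul_div_cancel _ (show 0 < p - 1 by omega)]

set_option maxHeartbeats 1000000 in
/-- For a prime power `p ≥ 3`, a seed `BGW(p+1, p, p-1)` over `ℤ_(p-1)` yields a balanced
generalized weighing matrix with classical parameters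
`BGW((p^(m+1)-1)/(p-1), p^m, p^(m-1)(p-1))` over `ℤ_(p-1)`, for every positive `m`. -/
theorem stmt_9 (q t p : ℕ) (hq : q.Prime) (ht : 1 ≤ t) (hp : p = q ^ t) (hp3 : 3 ≤ p)
    (hseed : ∃ W : Fin (p + 1) → Fin (p + 1) → Option (ZMod (p - 1)),
      IsBGW (p + 1) p (p - 1) (p - 1) W)
    (m : ℕ) (hm : 1 ≤ m) (N : ℕ) (hN : (p - 1) * N = p ^ (m + 1) - 1) :
    ∃ W' : Fin N → Fin N → Option (ZMod (p - 1)),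
      IsBGW N (p ^ m) (p ^ (m - 1) * (p - 1)) (p - 1) W' := by
  classical
  haveI : Fact q.Prime := ⟨hq⟩
  set F := GaloisField q (t * (m + 1)) with hFdef
  have hq2 : 2 ≤ q := hq.two_le
  have hp2 : 2 ≤ p := by omega
  have hp0 : p ≠ 0 := by omega
  have hF : Nat.card F = p ^ (m + 1) := by
    rw [hFdef, GaloisField.card q (t * (m + 1)) (by positivity), hp, ← pow_mul]
  -- the subfield of order p
  have hchar : CharP F q := inferInstance
  let K : Subfield F :=
    { carrier := {x : F | x ^ p = x}
      mul_mem' := by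
        intro a b ha hb
        simp only [Set.mem_setOf_eq] at *
        rw [mul_pow, ha, hb]
      one_mem' := by simp
      add_mem' := by
        intro a b ha hb
        simp only [Set.mem_setOf_eq] at *
        rw [hp, add_pow_char_pow, ← hp, ha, hb]
      zero_mem' := by
        simp only [Set.mem_setOf_eq]
        exact zero_pow hp0
      neg_mem' := by
        intro a ha
        simp only [Set.mem_setOf_eq] at *
        have h0 : (-a : F) = 0 - a := by ring
        rw [h0, hp, sub_pow_char_pow, ← hp, zero_pow hp0, ha]
      inv_mem' := by
        intro a ha
        simp only [Set.mem_setOf_eq] at *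
        rw [inv_pow, ha] }
  have hKmem : ∀ z : F, z ∈ K ↔ z ^ p = z := fun z => Iff.rfl
  -- card K = p
  have hdvd : (p - 1) ∣ p ^ (m + 1) - 1 := ⟨N, hN.symm⟩
  have hcFu : Nat.card Fˣ = p ^ (m + 1) - 1 := by rw [Nat.card_units, hF]
  have hM1 : 1 ≤ p ^ (m + 1) - 1 := by
    have : p ^ 1 ≤ p ^ (m + 1) := Nat.pow_le_pow_right (by omega) (by omega)
    simp only [pow_one] at this
    omega
  obtain ⟨g0, hg0⟩ := IsCyclic.exists_generator (α := Fˣ)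
  have horder : orderOf g0 = p ^ (m + 1) - 1 := by
    rw [orderOf_eq_card_of_forall_mem_zpowers hg0, hcFu]
  set ζu : Fˣ := g0 ^ ((p ^ (m + 1) - 1) / (p - 1)) with hζudef
  have hord : orderOf ζu = p - 1 := by
    rw [hζudef, orderOf_pow, horder, Nat.gcd_eq_right (Nat.div_dvd_of_dvd hdvd),
      Nat.div_div_self hdvd (by omega)]
  have hζ : IsPrimitiveRoot ((ζu : Fˣ) : F) (p - 1) := by
    rw [IsPrimitiveRoot.coe_units_iff, ← hord]
    exact IsPrimitiveRoot.orderOf ζu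
  have hroots := hζ.card_nthRootsFinset
  have hKset : (K : Set F) = insert (0 : F) ↑(Polynomial.nthRootsFinset (p - 1) (1 : F)) := by
    ext z
    simp only [SetLike.mem_coe, hKmem, Set.mem_insert_iff, Finset.mem_coe]
    constructor
    · intro hz
      by_cases h0 : z = 0
      · exact Or.inl h0
      · right
        rw [Polynomial.mem_nthRootsFinset (by omega)]
        have h1 : z ^ (p - 1) * z = 1 * z := by
          rw [← pow_succ, one_mul]
          have h2 : p - 1 + 1 = p := by omega
          rw [h2, hz]
        exact mul_right_cancel₀ h0 h1
    · rintro (rfl | hz)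
      · exact zero_pow hp0
      · rw [Polynomial.mem_nthRootsFinset (by omega)] at hz
        have h2 : p = p - 1 + 1 := by omega
        rw [h2, pow_succ, hz, one_mul]
  have hK : Nat.card K = p := by
    have h1 : Nat.card K = (K : Set F).ncard := by
      rw [← Nat.card_coe_set_eq]
      rfl
    have h0notin : (0 : F) ∉ (Polynomial.nthRootsFinset (p - 1) (1 : F) : Set F) := by
      rw [Finset.mem_coe, Polynomial.mem_nthRootsFinset (by omega : 0 < p - 1)]
      rw [zero_pow (by omega : p - 1 ≠ 0)]
      exact zero_ne_one
    rw [h1, hKset, Set.ncard_insert_of_notMem h0notin (Set.toFinite _),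
      Set.ncard_coe_finset, hroots]
    omega
  exact aux K p m N hp3 hm hK hF hN
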